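/- For v = softmax(a, b) ∈ ℝ², i.e., v₁ = e^a/(e^a+e^b), v₂ = e^b/(e^a+e^b), the 2×2 matrix diag(v) - v vᵀ has operator norm at most 1/2. -/

import Mathlib

open Matrix

theorem softmax_covariance_matrix_norm_le_half (a b : ℝ) :
    let v : Fin 2 → ℝ := fun i =>
      if i = 0 then Real.exp a / (Real.exp a + Real.exp b)
      else Real.exp b / (Real.exp a + Real.exp b)
    let M : Matrix (Fin 2) (Fin 2) ℝ :=
      Matrix.diagonal v - Matrix.of (fun i j => v i * v j)
    ‖LinearMap.toContinuousLinearMap (Matrix.toEuclideanLin M)‖ ≤ 1 / 2 := by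
  intro v M
  apply ContinuousLinearMap.opNorm_le_bound _ (by norm_num)
  intro x
  have hs : (0:ℝ) < Real.exp a + Real.exp b := by positivity
  set p := Real.exp a / (Real.exp a + Real.exp b) with hp'
  set q := Real.exp b / (Real.exp a + Real.exp b) with hq'
  have hpq : p + q = 1 := by rw [hp', hq', ← add_div, div_self hs.ne']
  have hp : 0 ≤ p := by positivity
  have hq : 0 ≤ q := by positivity
  have hpq4 : p * q ≤ 1 / 4 := by nlinarith [sq_nonneg (p - q)]
  rw [EuclideanSpace.norm_eq, EuclideanSpace.norm_eq]
  simp only [LinearMap.coe_toContinuousLinearMap', Matrix.toEuclideanLin_apply,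
    PiLp.toLp_apply, Matrix.mulVec, dotProduct, Fin.sum_univ_two,
    M, v, Matrix.sub_apply, Matrix.diagonal_apply, Matrix.of_apply,
    Real.norm_eq_abs, sq_abs]
  norm_num
  simp only [← hp', ← hq']
  have key : ((p - p * p) * x 0 + -(p * q * x 1)) ^ 2 +
      (-(q * p * x 0) + (q - q * q) * x 1) ^ 2 ≤ 1 / 4 * (x 0 ^ 2 + x 1 ^ 2) := by
    have hq1 : q = 1 - p := by linarith
    have h1 : p - p * p = p * q := by rw [hq1]; ring
    rw [h1]
    have h2 : (p * q * x 0 + -(p * q * x 1)) ^ 2 + (-(q * p * x 0) + p * q * x 1) ^ 2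
        = 2 * (p * q) ^ 2 * (x 0 - x 1) ^ 2 := by ring
    have h3 : q - q * q = p * q := by rw [hq1]; ring
    rw [h3, h2]
    nlinarith [sq_nonneg (x 0 - x 1), sq_nonneg (x 0 + x 1), mul_nonneg hp hq,
      mul_nonneg (mul_nonneg hp hq) (sq_nonneg (x 0 - x 1)),
      mul_nonneg (sub_nonneg.mpr hpq4) (sq_nonneg (x 0 - x 1))]
  calc √(((p - p * p) * x 0 + -(p * q * x 1)) ^ 2 + (-(q * p * x 0) + (q - q * q) * x 1) ^ 2)
      ≤ √(1 / 4 * (x 0 ^ 2 + x 1 ^ 2)) := Real.sqrt_le_sqrt key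
    _ = 1 / 2 * √(x 0 ^ 2 + x 1 ^ 2) := by
        rw [Real.sqrt_mul (by norm_num), show (1:ℝ)/4 = (1/2)^2 by norm_num,
          Real.sqrt_sq (by norm_num)]
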